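/- For every x = (x₁,x₂,x₃,x₄,x₅,x₆) ∈ [1,∞)⁶ with x₁ > 1, at least one of the following two alternatives holds: (i) ∂φ/∂x₂(x) > 0 and ∂φ/∂x₅(x) > 0; (ii) ∂φ/∂x₃(x) > 0 and ∂φ/∂x₆(x) > 0. -/

import Mathlib

open Real

lemma deriv_pos_aux (a b g d c x : ℝ) (hA : 0 < x ^ 2 + g * x + d) (hc : 0 < c)
    (hkey : 0 < 2 * a * (x ^ 2 + g * x + d) - (a * x + b) * (2 * x + g)) :
    0 < deriv (fun t => (a * t + b) / (Real.sqrt (t ^ 2 + g * t + d) * c)) x := by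
  have hA' : HasDerivAt (fun t : ℝ => t ^ 2 + g * t + d) (2 * x + g) x := by
    have h1 : HasDerivAt (fun t : ℝ => t ^ 2) (2 * x) x := by
      simpa using hasDerivAt_pow 2 x
    have h2 : HasDerivAt (fun t : ℝ => g * t) g x := by
      simpa using (hasDerivAt_id x).const_mul g
    simpa using (h1.add h2).add_const d
  have hAne : x ^ 2 + g * x + d ≠ 0 := ne_of_gt hA
  have hs : HasDerivAt (fun t : ℝ => Real.sqrt (t ^ 2 + g * t + d))
      ((2 * x + g) / (2 * Real.sqrt (x ^ 2 + g * x + d))) x := hA'.sqrt hAne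
  have hN : HasDerivAt (fun t : ℝ => a * t + b) a x := by
    simpa using ((hasDerivAt_id x).const_mul a).add_const b
  have hsp : 0 < Real.sqrt (x ^ 2 + g * x + d) := Real.sqrt_pos.2 hA
  have hgne : Real.sqrt (x ^ 2 + g * x + d) * c ≠ 0 := by positivity
  have hdiv := hN.div (hs.mul_const c) hgne
  rw [show (fun t => (a * t + b) / (Real.sqrt (t ^ 2 + g * t + d) * c)) = ((fun t => a * t + b) / fun y => Real.sqrt (y ^ 2 + g * y + d) * c) from rfl, hdiv.deriv]
  have hs2 : Real.sqrt (x ^ 2 + g * x + d) ^ 2 = x ^ 2 + g * x + d :=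
    Real.sq_sqrt hA.le
  set s := Real.sqrt (x ^ 2 + g * x + d) with hs_def
  apply div_pos
  · have heq : a * (s * c) - (a * x + b) * ((2 * x + g) / (2 * s) * c)
        = (2 * a * (x ^ 2 + g * x + d) - (a * x + b) * (2 * x + g)) * c / (2 * s) := by
      rw [← hs2]
      field_simp
    rw [heq]
    positivity
  · positivity

/-- The cosine of the dihedral angle at the edge `e₁` of a generalized hyper-ideal
tetrahedron whose edge lengths `lᵢ` satisfy `cosh lᵢ = xᵢ`. -/
noncomputable def phi (x1 x2 x3 x4 x5 x6 : ℝ) : ℝ :=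
  (x2 * x3 + x5 * x6 + x1 * x2 * x5 + x1 * x3 * x6 - x1 ^ 2 * x4 + x4) /
    (Real.sqrt (2 * x1 * x2 * x6 + x1 ^ 2 + x2 ^ 2 + x6 ^ 2 - 1) *
      Real.sqrt (2 * x1 * x3 * x5 + x1 ^ 2 + x3 ^ 2 + x5 ^ 2 - 1))

theorem phi_partial_positivity (x1 x2 x3 x4 x5 x6 : ℝ)
    (h1 : 1 ≤ x1) (h2 : 1 ≤ x2) (h3 : 1 ≤ x3) (h4 : 1 ≤ x4) (h5 : 1 ≤ x5) (h6 : 1 ≤ x6)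
    (h1' : 1 < x1) :
    (0 < deriv (fun t => phi x1 t x3 x4 x5 x6) x2 ∧
        0 < deriv (fun t => phi x1 x2 x3 x4 t x6) x5) ∨
      (0 < deriv (fun t => phi x1 x2 t x4 x5 x6) x3 ∧
        0 < deriv (fun t => phi x1 x2 x3 x4 x5 t) x6) := by
  have hx1 : (0:ℝ) < x1 := by linarith
  have hx2 : (0:ℝ) < x2 := by linarith
  have hx3 : (0:ℝ) < x3 := by linarith
  have hx4 : (0:ℝ) < x4 := by linarith
  have hx5 : (0:ℝ) < x5 := by linarith
  have hx6 : (0:ℝ) < x6 := by linarith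
  have hfac : 0 < x1 ^ 2 - 1 := by nlinarith
  have hApos : 0 < 2 * x1 * x2 * x6 + x1 ^ 2 + x2 ^ 2 + x6 ^ 2 - 1 := by
    linarith [mul_pos (mul_pos hx1 hx2) hx6, sq_nonneg x2, sq_nonneg x6, hfac]
  have hBpos : 0 < 2 * x1 * x3 * x5 + x1 ^ 2 + x3 ^ 2 + x5 ^ 2 - 1 := by
    linarith [mul_pos (mul_pos hx1 hx3) hx5, sq_nonneg x3, sq_nonneg x5, hfac]
  have hsA : 0 < Real.sqrt (2 * x1 * x2 * x6 + x1 ^ 2 + x2 ^ 2 + x6 ^ 2 - 1) :=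
    Real.sqrt_pos.2 hApos
  have hsB : 0 < Real.sqrt (2 * x1 * x3 * x5 + x1 ^ 2 + x3 ^ 2 + x5 ^ 2 - 1) :=
    Real.sqrt_pos.2 hBpos
  have e2 : (fun t => phi x1 t x3 x4 x5 x6)
      = fun t => ((x3 + x1 * x5) * t + (x5 * x6 + x1 * x3 * x6 - x1 ^ 2 * x4 + x4)) /
          (Real.sqrt (t ^ 2 + (2 * x1 * x6) * t + (x1 ^ 2 + x6 ^ 2 - 1)) *
            Real.sqrt (2 * x1 * x3 * x5 + x1 ^ 2 + x3 ^ 2 + x5 ^ 2 - 1)) := by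
    funext t; unfold phi; ring_nf
  have e5 : (fun t => phi x1 x2 x3 x4 t x6)
      = fun t => ((x6 + x1 * x2) * t + (x2 * x3 + x1 * x3 * x6 - x1 ^ 2 * x4 + x4)) /
          (Real.sqrt (t ^ 2 + (2 * x1 * x3) * t + (x1 ^ 2 + x3 ^ 2 - 1)) *
            Real.sqrt (2 * x1 * x2 * x6 + x1 ^ 2 + x2 ^ 2 + x6 ^ 2 - 1)) := by
    funext t; unfold phi; ring_nf
  have e3 : (fun t => phi x1 x2 t x4 x5 x6)
      = fun t => ((x2 + x1 * x6) * t + (x5 * x6 + x1 * x2 * x5 - x1 ^ 2 * x4 + x4)) /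
          (Real.sqrt (t ^ 2 + (2 * x1 * x5) * t + (x1 ^ 2 + x5 ^ 2 - 1)) *
            Real.sqrt (2 * x1 * x2 * x6 + x1 ^ 2 + x2 ^ 2 + x6 ^ 2 - 1)) := by
    funext t; unfold phi; ring_nf
  have e6 : (fun t => phi x1 x2 x3 x4 x5 t)
      = fun t => ((x5 + x1 * x3) * t + (x2 * x3 + x1 * x2 * x5 - x1 ^ 2 * x4 + x4)) /
          (Real.sqrt (t ^ 2 + (2 * x1 * x2) * t + (x1 ^ 2 + x2 ^ 2 - 1)) *
            Real.sqrt (2 * x1 * x3 * x5 + x1 ^ 2 + x3 ^ 2 + x5 ^ 2 - 1)) := by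
    funext t; unfold phi; ring_nf
  rcases le_total (x3 * x6) (x2 * x5) with hbe | hbe
  · left
    constructor
    · rw [e2]
      apply deriv_pos_aux
      · linarith [mul_pos (mul_pos hx1 hx6) hx2, sq_nonneg x2, sq_nonneg x6, hfac]
      · exact hsB
      · have hbr : 0 < (x4 - 1) * (x1 * x6 + x2) + x2 + x1 * x5 + x1 * x6 + x3
            + x6 * (x2 * x5 - x3 * x6) := by
          have t1 : 0 ≤ (x4 - 1) * (x1 * x6 + x2) := by
            apply mul_nonneg (by linarith); positivity
          have t2 : 0 ≤ x6 * (x2 * x5 - x3 * x6) := by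
            apply mul_nonneg (by linarith) (by linarith)
          linarith [mul_pos hx1 hx2, mul_pos hx1 hx3, mul_pos hx1 hx5, mul_pos hx1 hx6]
        linarith [mul_pos hfac hbr]
    · rw [e5]
      apply deriv_pos_aux
      · linarith [mul_pos (mul_pos hx1 hx3) hx5, sq_nonneg x5, sq_nonneg x3, hfac]
      · exact hsA
      · have hbr : 0 < (x4 - 1) * (x1 * x3 + x5) + x6 + x5 + x1 * x3 + x1 * x2
            + x3 * (x2 * x5 - x3 * x6) := by
          have t1 : 0 ≤ (x4 - 1) * (x1 * x3 + x5) := by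
            apply mul_nonneg (by linarith); positivity
          have t2 : 0 ≤ x3 * (x2 * x5 - x3 * x6) := by
            apply mul_nonneg (by linarith) (by linarith)
          linarith [mul_pos hx1 hx2, mul_pos hx1 hx3, mul_pos hx1 hx5, mul_pos hx1 hx6]
        linarith [mul_pos hfac hbr]
  · right
    constructor
    · rw [e3]
      apply deriv_pos_aux
      · linarith [mul_pos (mul_pos hx1 hx5) hx3, sq_nonneg x3, sq_nonneg x5, hfac]
      · exact hsA
      · have hbr : 0 < (x4 - 1) * (x1 * x5 + x3) + x3 + x1 * x6 + x1 * x5 + x2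
            + x5 * (x3 * x6 - x2 * x5) := by
          have t1 : 0 ≤ (x4 - 1) * (x1 * x5 + x3) := by
            apply mul_nonneg (by linarith); positivity
          have t2 : 0 ≤ x5 * (x3 * x6 - x2 * x5) := by
            apply mul_nonneg (by linarith) (by linarith)
          linarith [mul_pos hx1 hx2, mul_pos hx1 hx3, mul_pos hx1 hx5, mul_pos hx1 hx6]
        linarith [mul_pos hfac hbr]
    · rw [e6]
      apply deriv_pos_aux
      · linarith [mul_pos (mul_pos hx1 hx2) hx6, sq_nonneg x6, sq_nonneg x2, hfac]
      · exact hsB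
      · have hbr : 0 < (x4 - 1) * (x1 * x2 + x6) + x5 + x6 + x1 * x2 + x1 * x3
            + x2 * (x3 * x6 - x2 * x5) := by
          have t1 : 0 ≤ (x4 - 1) * (x1 * x2 + x6) := by
            apply mul_nonneg (by linarith); positivity
          have t2 : 0 ≤ x2 * (x3 * x6 - x2 * x5) := by
            apply mul_nonneg (by linarith) (by linarith)
          linarith [mul_pos hx1 hx2, mul_pos hx1 hx3, mul_pos hx1 hx5, mul_pos hx1 hx6]
        linarith [mul_pos hfac hbr]
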